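/- On the cycle graph with n vertices, n a multiple of 2r+1 and n ≥ 5r, any action-symmetric r-local probability distribution μ on {−1,+1}^n has average inefficiency at least 1/(2r+1), where average inefficiency is (1/n)Σ_{i} E[|a_i − a_{i+1 mod n}|]. -/

import Mathlib

open MeasureTheory ProbabilityTheory Finset

/-- The cycle graph on `ZMod n`: `i` adjacent to `i ± 1`. -/
def cycleGraph (n : ℕ) : SimpleGraph (ZMod n) :=
  SimpleGraph.fromRel (fun i j => j = i + 1)

lemma cycle_walk_sum {n : ℕ} {i j : ZMod n} (w : (cycleGraph n).Walk i j) :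
    ∃ s : ℤ, |s| ≤ w.length ∧ j = i + (s : ZMod n) := by
  induction w with
  | nil => exact ⟨0, by simp⟩
  | @cons u v _ h p ih =>
    obtain ⟨s, hs, hj⟩ := ih
    simp only [cycleGraph, SimpleGraph.fromRel_adj] at h
    rcases h.2 with h1 | h1
    · refine ⟨1 + s, ?_, ?_⟩
      · calc |1 + s| ≤ |(1:ℤ)| + |s| := abs_add_le _ _
          _ ≤ 1 + p.length := by simp; exact hs
          _ = (SimpleGraph.Walk.cons h p).length := by
            show (1:ℤ) + (p.length : ℤ) = ((p.length + 1 : ℕ) : ℤ); push_cast; ring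
      · rw [hj, h1]; push_cast; ring
    · refine ⟨-1 + s, ?_, ?_⟩
      · calc |-1 + s| ≤ |(-1:ℤ)| + |s| := abs_add_le _ _
          _ ≤ 1 + p.length := by simp; exact hs
          _ = (SimpleGraph.Walk.cons h p).length := by
            show (1:ℤ) + (p.length : ℤ) = ((p.length + 1 : ℕ) : ℤ); push_cast; ring
      · have : v = u - 1 := by rw [h1]; ring
        rw [hj, this]; push_cast; ring

lemma cycle_reachable {n : ℕ} (hn : 1 < n) (i : ZMod n) (k : ℕ) :
    (cycleGraph n).Reachable i (i + (k : ZMod n)) := by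
  induction k with
  | zero => simpa using SimpleGraph.Reachable.refl i
  | succ k ih =>
    refine ih.trans (SimpleGraph.Adj.reachable ?_)
    simp only [cycleGraph, SimpleGraph.fromRel_adj]
    constructor
    · intro hcon
      have h1 : ((k : ZMod n) : ZMod n) = (k:ZMod n) + 1 := by
        have := hcon
        push_cast at this ⊢
        linear_combination this - i - (k:ZMod n)
      have h0 : (1 : ZMod n) = 0 := by linear_combination -h1
      haveI : Fact (1 < n) := ⟨hn⟩
      exact one_ne_zero h0
    · left; push_cast; ring

lemma cycle_dist_gt {n r : ℕ} (hn : 4 * r + 2 ≤ n) (i : ZMod n) :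
    2 * r < (cycleGraph n).dist i (i + ((2 * r + 1 : ℕ) : ZMod n)) := by
  have hreach := cycle_reachable (by omega) i (2 * r + 1)
  obtain ⟨w, hw⟩ := hreach.exists_walk_length_eq_dist
  obtain ⟨s, hs, hj⟩ := cycle_walk_sum w
  rw [hw] at hs
  by_contra hcon
  push_neg at hcon
  have hs2 : |s| ≤ 2 * r := le_trans hs (by exact_mod_cast hcon)
  have heq : ((s : ℤ) : ZMod n) = ((2 * r + 1 : ℤ) : ZMod n) := by
    have h2 := hj
    push_cast at h2 ⊢
    linear_combination -h2
  rw [ZMod.intCast_eq_intCast_iff] at heq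
  have hdvd : (n : ℤ) ∣ (2 * r + 1 : ℤ) - s := heq.dvd
  have hpos : 0 < (2 * r + 1 : ℤ) - s := by
    have := abs_le.mp hs2; omega
  have := Int.le_of_dvd hpos hdvd
  have := abs_le.mp hs2
  omega

/-- On the cycle with `n` vertices, where `n` is a multiple of `2r+1` and
`n ≥ 5r`, any action-symmetric, `r`-local distribution of ±1 actions `(a_i)` has average
inefficiency `(1/n)·Σ_i E[|a_i − a_{i+1}|]` at least `1/(2r+1)`. Action-symmetry says the
joint law of `(a_i)_i` is invariant under global negation; `r`-locality says the actions
on two vertex sets at pairwise graph distance `> 2r` are independent. -/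
theorem stmt11 {Ω : Type} [MeasurableSpace Ω] (μ : Measure Ω) [IsProbabilityMeasure μ]
    (n r : ℕ) [NeZero n] (hmul : (2 * r + 1) ∣ n) (hn : 5 * r ≤ n) (hr : 0 < r)
    (a : ZMod n → Ω → ℝ) (hmeas : ∀ i, Measurable (a i))
    (hval : ∀ᵐ ω ∂μ, ∀ i, a i ω = -1 ∨ a i ω = 1)
    (hsymm : Measure.map (fun ω => fun i => a i ω) μ
        = Measure.map (fun ω => fun i => -(a i ω)) μ)
    (hlocal : ∀ N₁ N₂ : Finset (ZMod n),
        (∀ i ∈ N₁, ∀ j ∈ N₂, 2 * r < (cycleGraph n).dist i j) →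
        IndepFun (fun ω => fun i : ↥N₁ => a i ω) (fun ω => fun j : ↥N₂ => a j ω) μ) :
    1 / (2 * r + 1 : ℝ)
      ≤ (1 / (n : ℝ)) * ∑ i : ZMod n, ∫ ω, |a i ω - a (i + 1) ω| ∂μ := by
  have hn2 : 4 * r + 2 ≤ n := by
    obtain ⟨k, hk⟩ := hmul
    rcases Nat.lt_or_ge k 2 with h | h
    · interval_cases k <;> omega
    · nlinarith
  have hF : Measurable (fun ω => fun i : ZMod n => a i ω) := measurable_pi_lambda _ hmeas
  have hInt : ∀ i, Integrable (a i) μ := fun i =>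
    Integrable.mono' (integrable_const 1) (hmeas i).aestronglyMeasurable
      (hval.mono (fun ω h => by rcases h i with h' | h' <;> simp [h']))
  have hEzero : ∀ i, ∫ ω, a i ω ∂μ = 0 := by
    intro i
    have hmneg : Measurable fun ω => fun i : ZMod n => -(a i ω) :=
      measurable_pi_lambda _ (fun i => (hmeas i).neg)
    have h1 : ∫ ω, a i ω ∂μ = ∫ f, f i ∂(Measure.map (fun ω => fun i => a i ω) μ) :=
      (integral_map hF.aemeasurable (measurable_pi_apply i).aestronglyMeasurable).symm
    have h2 : ∫ f, f i ∂(Measure.map (fun ω => fun i => -(a i ω)) μ) = ∫ ω, -(a i ω) ∂μ :=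
      integral_map hmneg.aemeasurable (measurable_pi_apply i).aestronglyMeasurable
    rw [hsymm, h2, integral_neg] at h1
    linarith
  have hIntEdge : ∀ i : ZMod n, Integrable (fun ω => |a i ω - a (i + 1) ω|) μ :=
    fun i => ((hInt i).sub (hInt (i + 1))).abs
  have key : ∀ i : ZMod n, ∫ ω, |a i ω - a (i + ((2 * r + 1 : ℕ) : ZMod n)) ω| ∂μ = 1 := by
    intro i
    set j := i + ((2 * r + 1 : ℕ) : ZMod n) with hjdef
    have hdist := cycle_dist_gt hn2 i
    have hind0 := hlocal {i} {j} (by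
      intro x hx y hy
      simp only [Finset.mem_singleton] at hx hy
      subst hx; subst hy; exact hdist)
    have hind : IndepFun (a i) (a j) μ :=
      hind0.comp (φ := fun g : (↥({i} : Finset (ZMod n))) → ℝ => g ⟨i, by simp⟩)
        (ψ := fun g : (↥({j} : Finset (ZMod n))) → ℝ => g ⟨j, by simp⟩)
        (measurable_pi_apply _) (measurable_pi_apply _)
    have hcov : ∫ ω, a i ω * a j ω ∂μ = 0 := by
      have h := hind.integral_fun_mul_eq_mul_integral (hInt i).1 (hInt j).1
      rw [hEzero i, hEzero j, mul_zero] at h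
      exact h
    have hIntProd : Integrable (fun ω => a i ω * a j ω) μ :=
      Integrable.mono' (integrable_const 1) ((hmeas i).mul (hmeas j)).aestronglyMeasurable
        (hval.mono (fun ω h => by
          rcases h i with h1 | h1 <;> rcases h j with h2 | h2 <;> simp [h1, h2]))
    have hae : (fun ω => |a i ω - a j ω|) =ᵐ[μ] (fun ω => 1 - a i ω * a j ω) :=
      hval.mono (fun ω h => by
        show |a i ω - a j ω| = 1 - a i ω * a j ω
        rcases h i with h1 | h1 <;> rcases h j with h2 | h2 <;> rw [h1, h2] <;> norm_num)
    rw [integral_congr_ae hae, integral_sub (integrable_const 1) hIntProd, hcov]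
    simp
  have tri : ∀ (k : ℕ) (i : ZMod n) (ω : Ω),
      |a i ω - a (i + (k : ZMod n)) ω|
        ≤ ∑ t ∈ Finset.range k,
            |a (i + (t : ZMod n)) ω - a (i + (t : ZMod n) + 1) ω| := by
    intro k i ω
    induction k with
    | zero => simp
    | succ k ih =>
      rw [Finset.sum_range_succ]
      have hc : (((k + 1 : ℕ)) : ZMod n) = (k : ZMod n) + 1 := by push_cast; ring
      rw [hc, ← add_assoc]
      calc |a i ω - a (i + (k : ZMod n) + 1) ω|
          ≤ |a i ω - a (i + (k : ZMod n)) ω|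
            + |a (i + (k : ZMod n)) ω - a (i + (k : ZMod n) + 1) ω| := abs_sub_le _ _ _
        _ ≤ _ := by exact add_le_add ih le_rfl
  have hstep : ∀ i : ZMod n,
      1 ≤ ∑ t ∈ Finset.range (2 * r + 1),
            ∫ ω, |a (i + (t : ZMod n)) ω - a (i + (t : ZMod n) + 1) ω| ∂μ := by
    intro i
    have hsum := integral_finset_sum (μ := μ) (Finset.range (2 * r + 1))
      (f := fun t ω => |a (i + (t : ZMod n)) ω - a (i + (t : ZMod n) + 1) ω|)
      (fun t _ => hIntEdge (i + (t : ZMod n)))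
    rw [← hsum, ← key i]
    exact integral_mono ((hInt i).sub (hInt _)).abs
      (integrable_finset_sum _ (fun t _ => hIntEdge (i + (t : ZMod n))))
      (fun ω => tri (2 * r + 1) i ω)
  set S := ∑ i : ZMod n, ∫ ω, |a i ω - a (i + 1) ω| ∂μ with hS
  have hsum : (n : ℝ) ≤ (2 * (r : ℝ) + 1) * S := by
    calc (n : ℝ) = ∑ _i : ZMod n, (1 : ℝ) := by
          simp [Finset.card_univ, ZMod.card]
      _ ≤ ∑ i : ZMod n, ∑ t ∈ Finset.range (2 * r + 1),
            ∫ ω, |a (i + (t : ZMod n)) ω - a (i + (t : ZMod n) + 1) ω| ∂μ :=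
          Finset.sum_le_sum (fun i _ => hstep i)
      _ = ∑ t ∈ Finset.range (2 * r + 1), ∑ i : ZMod n,
            ∫ ω, |a (i + (t : ZMod n)) ω - a (i + (t : ZMod n) + 1) ω| ∂μ :=
          Finset.sum_comm
      _ = ∑ _t ∈ Finset.range (2 * r + 1), S := by
          refine Finset.sum_congr rfl (fun t _ => ?_)
          exact Fintype.sum_equiv (Equiv.addRight ((t : ZMod n)))
            _ _ (fun i => rfl)
      _ = (2 * (r : ℝ) + 1) * S := by
          rw [Finset.sum_const, Finset.card_range]
          push_cast; ring
  have hnpos : (0 : ℝ) < n := by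
    exact_mod_cast Nat.pos_of_ne_zero (NeZero.ne n)
  have h2r : (0 : ℝ) < 2 * (r : ℝ) + 1 := by positivity
  rw [div_le_iff₀ h2r]
  have h1 : (1 : ℝ) ≤ ((2 * (r : ℝ) + 1) * S) / n := by
    rw [le_div_iff₀ hnpos]; linarith
  calc (1 : ℝ) ≤ ((2 * (r : ℝ) + 1) * S) / n := h1
    _ = (1 / (n : ℝ)) * S * (2 * (r : ℝ) + 1) := by ring
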